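/- arXiv:2510.21698 — 2 statements merged into one kernel-verified Lean document; each statement's English description precedes it below -/
import Mathlib

section
/- Let W ∈ ℝ^{4×4} be symmetric positive semidefinite, with indices labeled k, m, k', m' (i.e., 1,2,3,4). Then the Jabr inequality holds: (W_{km} + W_{k'm'})² + (W_{mk'} − W_{km'})² ≤ (W_{kk} + W_{k'k'})(W_{mm} + W_{m'm'}). -/
open Matrix

/-- Jabr inequality from a PSD `4×4` matrix, with indices
`k = 0`, `m = 1`, `k' = 2`, `m' = 3`:
`(W_{km} + W_{k'm'})² + (W_{mk'} − W_{km'})² ≤ (W_{kk} + W_{k'k'})(W_{mm} + W_{m'm'})`. -/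
theorem jabr_inequality (W : Matrix (Fin 4) (Fin 4) ℝ)
    (hsymm : W.IsSymm) (hpsd : W.PosSemidef) :
    (W 0 1 + W 2 3) ^ 2 + (W 1 2 - W 0 3) ^ 2 ≤ (W 0 0 + W 2 2) * (W 1 1 + W 3 3) := by
  have e10 : W 1 0 = W 0 1 := hsymm.apply 0 1
  have e20 : W 2 0 = W 0 2 := hsymm.apply 0 2
  have e21 : W 2 1 = W 1 2 := hsymm.apply 1 2
  have e30 : W 3 0 = W 0 3 := hsymm.apply 0 3
  have e31 : W 3 1 = W 1 3 := hsymm.apply 1 3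
  have e32 : W 3 2 = W 2 3 := hsymm.apply 2 3
  have key : ∀ t : ℝ, 0 ≤
      (((W 0 1 + W 2 3) ^ 2 + (W 1 2 - W 0 3) ^ 2) * (W 0 0 + W 2 2)) * (t * t)
        + (2 * ((W 0 1 + W 2 3) ^ 2 + (W 1 2 - W 0 3) ^ 2)) * t + (W 1 1 + W 3 3) := by
    intro t
    have h1 := hpsd.dotProduct_mulVec_nonneg ![(W 0 1 + W 2 3) * t, 1, (W 1 2 - W 0 3) * t, 0]
    have h2 := hpsd.dotProduct_mulVec_nonneg ![-((W 1 2 - W 0 3) * t), 0, (W 0 1 + W 2 3) * t, 1]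
    simp only [dotProduct, mulVec, Fin.sum_univ_four, Matrix.cons_val_zero,
      Matrix.cons_val_one, Matrix.head_cons, Matrix.cons_val_two, Matrix.tail_cons,
      Matrix.cons_val_three, star_trivial, Pi.star_apply] at h1 h2
    rw [e10, e20, e21, e30, e31, e32] at h1 h2
    nlinarith [h1, h2]
  have hdisc := discrim_le_zero key
  rw [discrim] at hdisc
  have hS : 0 ≤ (W 0 1 + W 2 3) ^ 2 + (W 1 2 - W 0 3) ^ 2 := by positivity
  have hp0 : 0 ≤ W 0 0 + W 2 2 := by
    have h1 := hpsd.dotProduct_mulVec_nonneg ![1, 0, 0, 0]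
    have h2 := hpsd.dotProduct_mulVec_nonneg ![0, 0, 1, 0]
    simp [dotProduct, mulVec, Fin.sum_univ_four] at h1 h2
    linarith
  have hq0 : 0 ≤ W 1 1 + W 3 3 := by
    have h1 := hpsd.dotProduct_mulVec_nonneg ![0, 1, 0, 0]
    have h2 := hpsd.dotProduct_mulVec_nonneg ![0, 0, 0, 1]
    simp [dotProduct, mulVec, Fin.sum_univ_four] at h1 h2
    linarith
  nlinarith [hdisc, hS, hp0, hq0, mul_nonneg hp0 hq0]
end

section
/- Let W ∈ ℝ^{4×4} be symmetric positive semidefinite with indices {k,m,k',m'}, and let σ be any permutation of {k,m,k',m'}. Then the permuted Jabr inequality holds: (W_{σ(k)σ(m)} + W_{σ(k')σ(m')})² + (W_{σ(k)σ(m')} − W_{σ(m)σ(k')})² ≤ (W_{σ(k)σ(k)} + W_{σ(k')σ(k')})(W_{σ(m)σ(m)} + W_{σ(m')σ(m')}). -/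
open Matrix

/-- Permuted Jabr inequalities: for any permutation `σ` of the index set
`{k, m, k', m'} = {0, 1, 2, 3}` of a real symmetric PSD `4×4` matrix `W`,
`(W_{σ(k)σ(m)} + W_{σ(k')σ(m')})² + (W_{σ(k)σ(m')} − W_{σ(m)σ(k')})²
  ≤ (W_{σ(k)σ(k)} + W_{σ(k')σ(k')})(W_{σ(m)σ(m)} + W_{σ(m')σ(m')})`. -/
theorem permuted_jabr_inequality (W : Matrix (Fin 4) (Fin 4) ℝ)
    (hsymm : W.IsSymm) (hpsd : W.PosSemidef) (σ : Equiv.Perm (Fin 4)) :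
    (W (σ 0) (σ 1) + W (σ 2) (σ 3)) ^ 2 + (W (σ 0) (σ 3) - W (σ 1) (σ 2)) ^ 2 ≤
      (W (σ 0) (σ 0) + W (σ 2) (σ 2)) * (W (σ 1) (σ 1) + W (σ 3) (σ 3)) := by
  have hpsd' : (W.submatrix σ σ).PosSemidef := hpsd.submatrix σ
  set M : Matrix (Fin 4) (Fin 4) ℝ := W.submatrix σ σ with hM
  have hsym : ∀ i j : Fin 4, M i j = M j i := by
    intro i j
    simp only [hM, Matrix.submatrix_apply]
    rw [← hsymm.apply]
  have quad : ∀ x0 x1 x2 x3 : ℝ, 0 ≤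
      x0 * (M 0 0 * x0 + M 0 1 * x1 + M 0 2 * x2 + M 0 3 * x3) +
      x1 * (M 1 0 * x0 + M 1 1 * x1 + M 1 2 * x2 + M 1 3 * x3) +
      x2 * (M 2 0 * x0 + M 2 1 * x1 + M 2 2 * x2 + M 2 3 * x3) +
      x3 * (M 3 0 * x0 + M 3 1 * x1 + M 3 2 * x2 + M 3 3 * x3) := by
    intro x0 x1 x2 x3
    have := hpsd'.dotProduct_mulVec_nonneg ![x0, x1, x2, x3]
    simpa [Matrix.mulVec, dotProduct, Fin.sum_univ_four, mul_comm, mul_assoc,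
      mul_left_comm] using this
  have e : ∀ i j : Fin 4, W (σ i) (σ j) = M i j := fun i j => rfl
  rw [e 0 1, e 2 3, e 0 3, e 1 2, e 0 0, e 2 2, e 1 1, e 3 3]
  have s10 := hsym 1 0
  have s20 := hsym 2 0
  have s30 := hsym 3 0
  have s21 := hsym 2 1
  have s31 := hsym 3 1
  have s32 := hsym 3 2
  have hr0 : 0 ≤ M 0 0 + M 2 2 := by nlinarith [quad 1 0 0 0, quad 0 0 1 0]
  have hs0 : 0 ≤ M 1 1 + M 3 3 := by nlinarith [quad 0 1 0 0, quad 0 0 0 1]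
  have step : ∀ x : ℝ, 0 ≤ (M 1 1 + M 3 3) * (x * x) +
      (2 * ((M 0 1 + M 2 3) ^ 2 + (M 0 3 - M 1 2) ^ 2)) * x +
      ((M 0 1 + M 2 3) ^ 2 + (M 0 3 - M 1 2) ^ 2) * (M 0 0 + M 2 2) := by
    intro x
    have h1 := quad (M 0 1 + M 2 3) x (-(M 0 3 - M 1 2)) 0
    have h2 := quad (M 0 3 - M 1 2) 0 (M 0 1 + M 2 3) x
    rw [s10, s20, s30, s21, s31, s32] at h1 h2
    nlinarith [h1, h2]
  have hdisc := discrim_le_zero step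
  rw [discrim] at hdisc
  rcases eq_or_lt_of_le
      (by positivity : (0:ℝ) ≤ (M 0 1 + M 2 3) ^ 2 + (M 0 3 - M 1 2) ^ 2) with hzero | hpos
  · rw [← hzero]
    exact mul_nonneg hr0 hs0
  · nlinarith [hdisc, hpos, hr0, hs0]
end
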